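/- (Gumbel-Max sampling, equation (15) of the paper.) Let a ≥ 1 and let π : Fin a → ℝ be a pmf with π_i > 0 for all i. Let γ be the standard Gumbel measure on ℝ, i.e. the measure with density x ↦ exp(−x − exp(−x)) with respect to Lebesgue measure, and let P = ⨂_{i : Fin a} γ be the product measure on ℝ^{Fin a} (i.e. τ_1, …, τ_a are i.i.d. standard Gumbel). Then for every k ∈ Fin a, P( { τ : ∀ i ≠ k, τ_k + log π_k > τ_i + log π_i } ) = π_k. In other words, the index attaining the maximum of (τ_i + log π_i)_{i} is distributed according to π. -/

import Mathlib

open MeasureTheory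
open scoped BigOperators

/-- The standard Gumbel measure on `ℝ`, with density `x ↦ exp(−x − exp(−x))`
with respect to Lebesgue measure. -/
noncomputable def gumbelMeasure : Measure ℝ :=
  volume.withDensity fun x => ENNReal.ofReal (Real.exp (-x - Real.exp (-x)))

open Set Filter Topology

namespace GumbelAux

lemma hasDerivAt_aux (A : ℝ) (hA : A ≠ 0) (y : ℝ) :
    HasDerivAt (fun y => -A⁻¹ * Real.exp (-A * Real.exp y))
      (Real.exp (y - A * Real.exp y)) y := by
  have h1 : HasDerivAt (fun y : ℝ => -A * Real.exp y) (-A * Real.exp y) y :=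
    (Real.hasDerivAt_exp y).const_mul (-A)
  have h2 := h1.exp.const_mul (-A⁻¹)
  refine h2.congr_deriv ?_
  rw [sub_eq_add_neg, Real.exp_add, ← neg_mul]
  field_simp

lemma integral_Iic_aux (A : ℝ) (hA : 0 < A) (s : ℝ) :
    IntegrableOn (fun x => Real.exp (-x - A * Real.exp (-x))) (Iic s) ∧
      ∫ x in Iic s, Real.exp (-x - A * Real.exp (-x))
        = A⁻¹ * Real.exp (-A * Real.exp (-s)) := by
  set g : ℝ → ℝ := fun y => -A⁻¹ * Real.exp (-A * Real.exp y) with hg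
  have hderiv : ∀ y ∈ Ici (-s), HasDerivAt g (Real.exp (y - A * Real.exp y)) y :=
    fun y _ => hasDerivAt_aux A hA.ne' y
  have hpos : ∀ y ∈ Ioi (-s), 0 ≤ Real.exp (y - A * Real.exp y) :=
    fun y _ => (Real.exp_pos _).le
  have hlim : Tendsto g atTop (𝓝 0) := by
    have h1 : Tendsto (fun y : ℝ => -A * Real.exp y) atTop atBot := by
      apply Tendsto.const_mul_atTop_of_neg (neg_lt_zero.mpr hA) Real.tendsto_exp_atTop
    have h2 : Tendsto (fun y : ℝ => Real.exp (-A * Real.exp y)) atTop (𝓝 0) :=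
      Real.tendsto_exp_atBot.comp h1
    have h3 := h2.const_mul (-A⁻¹)
    rw [mul_zero] at h3
    exact h3
  have hint : IntegrableOn (fun y => Real.exp (y - A * Real.exp y)) (Ioi (-s)) :=
    integrableOn_Ioi_deriv_of_nonneg' hderiv hpos hlim
  have hval : ∫ y in Ioi (-s), Real.exp (y - A * Real.exp y) = 0 - g (-s) :=
    integral_Ioi_of_hasDerivAt_of_nonneg' hderiv hpos hlim
  have hcomp : (fun y : ℝ => Real.exp (-(-y) - A * Real.exp (-(-y))))
      = fun y => Real.exp (y - A * Real.exp y) := by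
    funext y; rw [neg_neg]
  constructor
  · have := (MeasurePreserving.integrableOn_comp_preimage
      (Measure.measurePreserving_neg (volume : Measure ℝ))
      (Homeomorph.neg ℝ).measurableEmbedding
      (f := fun x => Real.exp (-x - A * Real.exp (-x))) (s := Iic s)).symm
    rw [this]
    have hpre : (fun x : ℝ => -x) ⁻¹' Iic s = Ici (-s) := by
      ext x; simp [neg_le]
    rw [hpre]
    have : ((fun x => Real.exp (-x - A * Real.exp (-x))) ∘ fun x : ℝ => -x)
        = fun y => Real.exp (y - A * Real.exp y) := by
      funext y; simp [Function.comp, neg_neg]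
    rw [this]
    exact (integrableOn_Ici_iff_integrableOn_Ioi (hb := enorm_ne_top)).mpr hint
  · have := integral_comp_neg_Ioi (-s) (fun x => Real.exp (-x - A * Real.exp (-x)))
    rw [neg_neg] at this
    rw [← this]
    simp_rw [hcomp]
    rw [hval, hg]
    simp


lemma measurable_density (A : ℝ) :
    Measurable fun x : ℝ => ENNReal.ofReal (Real.exp (-x - A * Real.exp (-x))) := by
  fun_prop

lemma lintegral_Iic_aux (A : ℝ) (hA : 0 < A) (s : ℝ) :
    ∫⁻ x in Iic s, ENNReal.ofReal (Real.exp (-x - A * Real.exp (-x)))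
      = ENNReal.ofReal (A⁻¹ * Real.exp (-A * Real.exp (-s))) := by
  obtain ⟨hint, hval⟩ := integral_Iic_aux A hA s
  rw [← ofReal_integral_eq_lintegral_ofReal hint
    (Eventually.of_forall fun x => (Real.exp_pos _).le), hval]

lemma lintegral_univ_aux (A : ℝ) (hA : 0 < A) :
    ∫⁻ x, ENNReal.ofReal (Real.exp (-x - A * Real.exp (-x)))
      = ENNReal.ofReal A⁻¹ := by
  set μ := volume.withDensity fun x => ENNReal.ofReal (Real.exp (-x - A * Real.exp (-x))) with hμ
  have happ : ∀ s : Set ℝ, MeasurableSet s →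
      μ s = ∫⁻ x in s, ENNReal.ofReal (Real.exp (-x - A * Real.exp (-x))) :=
    fun s hs => withDensity_apply _ hs
  have huniv : μ univ = ∫⁻ x, ENNReal.ofReal (Real.exp (-x - A * Real.exp (-x))) := by
    rw [happ univ MeasurableSet.univ, Measure.restrict_univ]
  rw [← huniv]
  have hmono : Monotone fun n : ℕ => Iic ((n : ℝ)) :=
    fun m n h => Iic_subset_Iic.2 (Nat.cast_le.2 h)
  have hU : (⋃ n : ℕ, Iic ((n : ℝ))) = univ := by
    ext x
    simp only [mem_iUnion, mem_Iic, mem_univ, iff_true]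
    exact exists_nat_ge x
  have h1 : Tendsto (fun n : ℕ => μ (Iic ((n : ℝ)))) atTop (𝓝 (μ univ)) := by
    have := tendsto_measure_iUnion_atTop (μ := μ) hmono
    rwa [hU] at this
  have h2 : Tendsto (fun n : ℕ => μ (Iic ((n : ℝ)))) atTop (𝓝 (ENNReal.ofReal A⁻¹)) := by
    have heq : (fun n : ℕ => μ (Iic ((n : ℝ))))
        = fun n : ℕ => ENNReal.ofReal (A⁻¹ * Real.exp (-A * Real.exp (-(n : ℝ)))) := by
      funext n
      rw [happ _ measurableSet_Iic, lintegral_Iic_aux A hA]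
    rw [heq]
    have hr : Tendsto (fun n : ℕ => A⁻¹ * Real.exp (-A * Real.exp (-(n : ℝ)))) atTop
        (𝓝 (A⁻¹ * 1)) := by
      apply Tendsto.const_mul
      have : Tendsto (fun n : ℕ => -A * Real.exp (-(n : ℝ))) atTop (𝓝 (-A * 0)) := by
        apply Tendsto.const_mul
        exact Real.tendsto_exp_atBot.comp
          (tendsto_neg_atBot_iff.mpr tendsto_natCast_atTop_atTop)
      have := (Real.continuous_exp.tendsto _).comp this
      simpa [Function.comp_def] using this
    have := (ENNReal.continuous_ofReal.tendsto _).comp hr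
    simpa [Function.comp_def] using this
  exact tendsto_nhds_unique h1 h2

end GumbelAux

namespace GumbelAux

lemma one_mul_density :
    (fun x : ℝ => ENNReal.ofReal (Real.exp (-x - Real.exp (-x))))
      = fun x : ℝ => ENNReal.ofReal (Real.exp (-x - 1 * Real.exp (-x))) := by
  funext x; rw [one_mul]

end GumbelAux

instance : IsProbabilityMeasure gumbelMeasure := by
  constructor
  rw [gumbelMeasure, withDensity_apply _ MeasurableSet.univ, Measure.restrict_univ,
    GumbelAux.one_mul_density, GumbelAux.lintegral_univ_aux 1 one_pos]
  simp

lemma gumbel_Iio (c : ℝ) :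
    gumbelMeasure (Iio c) = ENNReal.ofReal (Real.exp (-Real.exp (-c))) := by
  rw [gumbelMeasure, withDensity_apply _ measurableSet_Iio,
    setLIntegral_congr Iio_ae_eq_Iic, GumbelAux.one_mul_density,
    GumbelAux.lintegral_Iic_aux 1 one_pos c]
  norm_num

/-- Gumbel-Max sampling (equation (15) of the paper): if `τ₁, …, τ_a` are i.i.d.
standard Gumbel and `π` is a strictly positive pmf on `Fin a`, then for each `k`,
the probability that `τ_k + log π_k` strictly exceeds `τ_i + log π_i` for all `i ≠ k`
equals `π_k`; i.e. the argmax of `(τ_i + log π_i)_i` has law `π`. -/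
theorem gumbel_max_sampling
    (a : ℕ) (ha : 1 ≤ a) (w : Fin a → ℝ)
    (hw0 : ∀ i, 0 < w i) (hw1 : ∑ i, w i = 1) (k : Fin a) :
    (Measure.pi fun _ : Fin a => gumbelMeasure)
        {τ : Fin a → ℝ | ∀ i, i ≠ k →
          τ i + Real.log (w i) < τ k + Real.log (w k)}
      = ENNReal.ofReal (w k) := by
  obtain ⟨n, rfl⟩ : ∃ n, a = n + 1 := ⟨a - 1, by omega⟩
  set d : Fin n → ℝ := fun j => Real.log (w k) - Real.log (w (k.succAbove j)) with hd
  set S : Set (Fin (n + 1) → ℝ) :=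
    {τ | ∀ i, i ≠ k → τ i + Real.log (w i) < τ k + Real.log (w k)} with hS
  have hSm : MeasurableSet S := by
    have h1 : S = ⋂ i, {τ : Fin (n + 1) → ℝ | i ≠ k →
        τ i + Real.log (w i) < τ k + Real.log (w k)} := by
      ext τ; simp [hS]
    rw [h1]
    refine MeasurableSet.iInter fun i => ?_
    by_cases h : i = k
    · simp [h]
    · simp only [ne_eq, h, not_false_eq_true, true_implies]
      exact measurableSet_lt (by fun_prop) (by fun_prop)
  set e := MeasurableEquiv.piFinSuccAbove (fun _ : Fin (n + 1) => ℝ) k with he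
  have hmp := measurePreserving_piFinSuccAbove (fun _ : Fin (n + 1) => gumbelMeasure) k
  set T : Set (ℝ × (Fin n → ℝ)) := {p | ∀ j, p.2 j < p.1 + d j} with hT
  have hTm : MeasurableSet T := by
    have h1 : T = ⋂ j, {p : ℝ × (Fin n → ℝ) | p.2 j < p.1 + d j} := by
      ext p; simp [hT]
    rw [h1]
    exact MeasurableSet.iInter fun j => measurableSet_lt (by fun_prop) (by fun_prop)
  have hsymm : e.symm ⁻¹' S = T := by
    ext ⟨t, y⟩
    have hev : e.symm (t, y) = k.insertNth t y := rfl
    simp only [Set.mem_preimage, hev, hS, Set.mem_setOf_eq, hT]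
    constructor
    · intro h j
      have := h (k.succAbove j) (Fin.succAbove_ne k j)
      rw [Fin.insertNth_apply_succAbove, Fin.insertNth_apply_same] at this
      simp only [hd]
      linarith
    · intro h i hi
      obtain ⟨j, rfl⟩ := Fin.exists_succAbove_eq hi
      rw [Fin.insertNth_apply_succAbove, Fin.insertNth_apply_same]
      have := h j
      simp only [hd] at this
      linarith
  have hPS : (Measure.pi fun _ : Fin (n + 1) => gumbelMeasure) S
      = (gumbelMeasure.prod (Measure.pi fun _ : Fin n => gumbelMeasure)) T := by
    rw [← hmp.map_eq, Measure.map_apply e.measurable hTm, ← hsymm]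
    congr 1
    ext τ
    simp
  set B : ℝ := (∑ j, w (k.succAbove j)) / w k with hB
  have hB0 : 0 ≤ B := by
    apply div_nonneg _ (hw0 k).le
    exact Finset.sum_nonneg fun j _ => (hw0 _).le
  have hinner : ∀ t : ℝ, (Measure.pi fun _ : Fin n => gumbelMeasure) (Prod.mk t ⁻¹' T)
      = ENNReal.ofReal (Real.exp (-(Real.exp (-t) * B))) := by
    intro t
    have hsec : (Prod.mk t ⁻¹' T) = Set.pi univ fun j => Iio (t + d j) := by
      ext y; simp [hT]
    rw [hsec, Measure.pi_pi]
    simp_rw [gumbel_Iio]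
    rw [← ENNReal.ofReal_prod_of_nonneg (fun j _ => (Real.exp_pos _).le),
      ← Real.exp_sum]
    congr 1
    have hterm : ∀ x : Fin n, Real.exp (-(t + d x))
        = Real.exp (-t) * (w (k.succAbove x) / w k) := by
      intro x
      rw [neg_add, Real.exp_add]
      congr 1
      simp only [hd]
      rw [neg_sub, Real.exp_sub, Real.exp_log (hw0 _), Real.exp_log (hw0 k)]
    rw [Finset.sum_neg_distrib]
    congr 1
    simp_rw [hterm]
    rw [← Finset.mul_sum, hB, Finset.sum_div]
  rw [hPS, Measure.prod_apply hTm]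
  simp_rw [hinner]
  have hgm : Measurable fun x : ℝ => ENNReal.ofReal (Real.exp (-x - Real.exp (-x))) := by
    fun_prop
  rw [gumbelMeasure, lintegral_withDensity_eq_lintegral_mul _ hgm (by fun_prop)]
  have hAB : (0 : ℝ) < 1 + B := by linarith
  have hfun : (fun x : ℝ => ((fun x : ℝ => ENNReal.ofReal (Real.exp (-x - Real.exp (-x))))
        * fun x : ℝ => ENNReal.ofReal (Real.exp (-(Real.exp (-x) * B)))) x)
      = fun x : ℝ => ENNReal.ofReal (Real.exp (-x - (1 + B) * Real.exp (-x))) := by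
    funext x
    simp only [Pi.mul_apply]
    rw [← ENNReal.ofReal_mul (Real.exp_pos _).le, ← Real.exp_add]
    congr 1
    ring
  rw [hfun, GumbelAux.lintegral_univ_aux (1 + B) hAB]
  congr 1
  have hs : ∑ j, w (k.succAbove j) = 1 - w k := by
    rw [Fin.sum_univ_succAbove w k] at hw1
    linarith
  rw [hB, hs, show (1 + (1 - w k) / w k) = (w k)⁻¹ by field_simp [(hw0 k).ne']; ring, inv_inv]
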